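/- Let A = O_C[[X]] be the power series ring over O_C. Then every prime ideal 𝔭 of A satisfies at least one of the following: (i) 𝔭 is contained in 𝔭_crys := {Σ_{n≥0} a_n X^n : a_n ∈ m_C for all n}; (ii) 𝔭 equals 𝔪 := {Σ_{n≥0} a_n X^n : a_0 ∈ m_C} (the unique maximal ideal of A); (iii) 𝔭 is the principal ideal generated by X − c for some c ∈ m_C. -/

import Mathlib

/-!
STATEMENT 0: Let `C` be an algebraically closed field of characteristic `p`, complete with
respect to a nontrivial nonarchimedean absolute value, with valuation ring `O_C` and maximal
ideal `m_C`.  Every prime ideal `𝔭` of `A = O_C[[X]]` satisfies: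
(i) `𝔭 ⊆ 𝔭_crys = {Σ aₙ Xⁿ : aₙ ∈ m_C for all n}`, or
(ii) `𝔭 = 𝔪 = {Σ aₙ Xⁿ : a₀ ∈ m_C}`, or
(iii) `𝔭 = (X - c)` for some `c ∈ m_C`.
-/

noncomputable section


open PowerSeries Filter

section Stage1

variable {C : Type} [NontriviallyNormedField C] [CompleteSpace C] [IsUltrametricDist C]
  {K : Subring C} (hK : ∀ x : C, x ∈ K ↔ ‖x‖ ≤ 1)

include hK in
lemma normK (a : K) : ‖(a : C)‖ ≤ 1 := (hK _).1 a.2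

lemma aux_summable {c : C} (hc : ‖c‖ < 1) (u : ℕ → C) (hu : ∀ n, ‖u n‖ ≤ 1) :
    Summable (fun n => u n * c ^ n) := by
  apply Summable.of_norm
  refine Summable.of_nonneg_of_le (fun n => norm_nonneg _) (fun n => ?_)
    (summable_geometric_of_lt_one (norm_nonneg c) hc)
  rw [norm_mul, norm_pow]
  exact mul_le_of_le_one_left (pow_nonneg (norm_nonneg c) n) (hu n)

/-- Evaluation of a power series over `K` at a point `c` of `C`. -/
def evalK (c : C) (f : PowerSeries K) : C :=
  ∑' n, ((PowerSeries.coeff (R := K) n f : K) : C) * c ^ n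

include hK in
lemma evalK_summable {c : C} (hc : ‖c‖ < 1) (f : PowerSeries K) :
    Summable (fun n => ((PowerSeries.coeff (R := K) n f : K) : C) * c ^ n) :=
  aux_summable hc _ (fun n => normK hK _)

include hK in
lemma evalK_norm_le {c : C} (hc : ‖c‖ < 1) (f : PowerSeries K) : ‖evalK c f‖ ≤ 1 := by
  refine IsUltrametricDist.norm_tsum_le_of_forall_le_of_nonneg zero_le_one (fun n => ?_)
  rw [norm_mul, norm_pow]
  have h1 : ‖c‖ ^ n ≤ 1 := pow_le_one₀ (norm_nonneg c) hc.le
  have := normK hK (PowerSeries.coeff (R := K) n f)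
  nlinarith [norm_nonneg ((PowerSeries.coeff (R := K) n f : K) : C), pow_nonneg (norm_nonneg c) n]

include hK in
lemma evalK_sub {c : C} (hc : ‖c‖ < 1) (f g : PowerSeries K) :
    evalK c (f - g) = evalK c f - evalK c g := by
  unfold evalK
  rw [← Summable.tsum_sub (evalK_summable hK hc f) (evalK_summable hK hc g)]
  congr 1; funext n
  rw [map_sub]
  push_cast
  ring

lemma evalK_C (c : C) (a : K) : evalK c (PowerSeries.C (R := K) a) = a := by
  unfold evalK
  rw [tsum_eq_single 0]
  · simp
  · intro n hn
    simp [PowerSeries.coeff_C, hn]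

include hK in
lemma evalK_eq_head_add {c : C} (hc : ‖c‖ < 1) (f : PowerSeries K) :
    evalK c f = ((PowerSeries.coeff (R := K) 0 f : K) : C)
      + c * ∑' j, ((PowerSeries.coeff (R := K) (j + 1) f : K) : C) * c ^ j := by
  unfold evalK
  rw [Summable.tsum_eq_zero_add (evalK_summable hK hc f)]
  rw [← tsum_mul_left]
  simp only [pow_zero, mul_one]
  congr 1
  exact tsum_congr fun j => by ring

include hK in
lemma evalK_sub_head {c : C} (hc : ‖c‖ < 1) (f : PowerSeries K) :
    ‖evalK c f - ((PowerSeries.coeff (R := K) 0 f : K) : C)‖ ≤ ‖c‖ := by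
  rw [evalK_eq_head_add hK hc f, add_sub_cancel_left]
  rw [norm_mul]
  have : ‖∑' j, ((PowerSeries.coeff (R := K) (j + 1) f : K) : C) * c ^ j‖ ≤ 1 := by
    refine IsUltrametricDist.norm_tsum_le_of_forall_le_of_nonneg zero_le_one (fun n => ?_)
    rw [norm_mul, norm_pow]
    have h1 : ‖c‖ ^ n ≤ 1 := pow_le_one₀ (norm_nonneg c) hc.le
    have := normK hK (PowerSeries.coeff (R := K) (n+1) f)
    nlinarith [norm_nonneg ((PowerSeries.coeff (R := K) (n+1) f : K) : C),
      pow_nonneg (norm_nonneg c) n]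
  nlinarith [norm_nonneg c]

include hK in
lemma mem_span_of_evalK_eq_zero {c : K} (hc : ‖(c : C)‖ < 1) {f : PowerSeries K}
    (hev : evalK (c : C) f = 0) :
    f ∈ Ideal.span {PowerSeries.X - PowerSeries.C (R := K) c} := by
  rw [Ideal.mem_span_singleton]
  set t : ℕ → C := fun k => ∑' j, ((PowerSeries.coeff (R := K) (j + k + 1) f : K) : C) * (c : C) ^ j
    with ht
  have htmem : ∀ k, ‖t k‖ ≤ 1 := by
    intro k
    refine IsUltrametricDist.norm_tsum_le_of_forall_le_of_nonneg zero_le_one (fun n => ?_)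
    rw [norm_mul, norm_pow]
    have h1 : ‖(c:C)‖ ^ n ≤ 1 := pow_le_one₀ (norm_nonneg _) hc.le
    have := normK hK (PowerSeries.coeff (R := K) (n + k + 1) f)
    nlinarith [norm_nonneg ((PowerSeries.coeff (R := K) (n + k + 1) f : K) : C),
      pow_nonneg (norm_nonneg (c:C)) n]
  have htrec : ∀ k, t k = ((PowerSeries.coeff (R := K) (k + 1) f : K) : C) + (c : C) * t (k + 1) := by
    intro k
    have hsum : Summable (fun j => ((PowerSeries.coeff (R := K) (j + k + 1) f : K) : C) * (c : C) ^ j) :=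
      aux_summable hc _ (fun n => normK hK _)
    rw [ht]
    simp only
    rw [Summable.tsum_eq_zero_add hsum, ← tsum_mul_left]
    simp only [pow_zero, mul_one, zero_add]
    congr 1
    refine tsum_congr fun j => ?_
    have he : j + 1 + k + 1 = j + (k + 1) + 1 := by omega
    rw [he]
    ring
  have hhead : ((PowerSeries.coeff (R := K) 0 f : K) : C) = - ((c:C) * t 0) := by
    have h0 := evalK_eq_head_add hK hc f
    rw [hev] at h0
    have : t 0 = ∑' j, ((PowerSeries.coeff (R := K) (j + 1) f : K) : C) * (c : C) ^ j := by
      rw [ht]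
    rw [this]
    linear_combination -h0
  set g : PowerSeries K := PowerSeries.mk (fun k => (⟨t k, (hK _).2 (htmem k)⟩ : K)) with hg
  refine ⟨g, ?_⟩
  ext n
  have hcoeffg : ∀ k, ((PowerSeries.coeff (R := K) k g : K) : C) = t k := by
    intro k; rw [hg]; simp
  cases n with
  | zero =>
    have h1 : PowerSeries.coeff (R := K) 0 ((PowerSeries.X - PowerSeries.C (R := K) c) * g)
        = -(c * PowerSeries.coeff (R := K) 0 g) := by
      simp [sub_mul, PowerSeries.coeff_zero_eq_constantCoeff_apply, map_mul, map_sub]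
    rw [h1]
    push_cast
    rw [hcoeffg 0]
    exact hhead
  | succ k =>
    have h1 : PowerSeries.coeff (R := K) (k+1) ((PowerSeries.X - PowerSeries.C (R := K) c) * g)
        = PowerSeries.coeff (R := K) k g - c * PowerSeries.coeff (R := K) (k+1) g := by
      rw [sub_mul, map_sub, PowerSeries.coeff_succ_X_mul, PowerSeries.coeff_C_mul]
    rw [h1]
    push_cast
    rw [hcoeffg k, hcoeffg (k+1), htrec k]
    ring

end Stage1

section Stage2

variable {C : Type} [NontriviallyNormedField C] [CompleteSpace C] [IsUltrametricDist C]
  {K : Subring C} (hK : ∀ x : C, x ∈ K ↔ ‖x‖ ≤ 1)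

/-- shift-down operator on power series -/
def shiftm {R : Type*} [Semiring R] (m : ℕ) (v : PowerSeries R) : PowerSeries R :=
  PowerSeries.mk fun j => PowerSeries.coeff (R := R) (m + j) v

@[simp] lemma coeff_shiftm {R : Type*} [Semiring R] (m n : ℕ) (v : PowerSeries R) :
    PowerSeries.coeff (R := R) n (shiftm m v) = PowerSeries.coeff (R := R) (m + n) v := by
  simp [shiftm]

lemma shiftm_sub {R : Type*} [Ring R] (m : ℕ) (u v : PowerSeries R) :
    shiftm m (u - v) = shiftm m u - shiftm m v := by
  ext n; simp

@[simp] lemma shiftm_zero {R : Type*} [Semiring R] (m : ℕ) : shiftm m (0 : PowerSeries R) = 0 := by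
  ext n; simp

lemma coeff_X_pow_mul_cases {R : Type*} [CommSemiring R] (φ : PowerSeries R) (m n : ℕ) :
    PowerSeries.coeff (R := R) n (PowerSeries.X ^ m * φ)
      = if m ≤ n then PowerSeries.coeff (R := R) (n - m) φ else 0 := by
  by_cases h : m ≤ n
  · rw [if_pos h]
    have : n = (n - m) + m := by omega
    conv_lhs => rw [this]
    exact PowerSeries.coeff_X_pow_mul φ m (n - m)
  · rw [if_neg h, PowerSeries.coeff_mul]
    apply Finset.sum_eq_zero
    intro p hp
    rw [Finset.HasAntidiagonal.mem_antidiagonal] at hp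
    have : p.1 ≠ m := by omega
    rw [PowerSeries.coeff_X_pow, if_neg this, zero_mul]

lemma coeff_mul_bound {u v : PowerSeries K} {M1 M2 : ℝ} (h1 : 0 ≤ M1) (h2 : 0 ≤ M2)
    (hu : ∀ n, ‖((PowerSeries.coeff (R := K) n u : K) : C)‖ ≤ M1)
    (hv : ∀ n, ‖((PowerSeries.coeff (R := K) n v : K) : C)‖ ≤ M2) (n : ℕ) :
    ‖((PowerSeries.coeff (R := K) n (u * v) : K) : C)‖ ≤ M1 * M2 := by
  rw [PowerSeries.coeff_mul]
  have hc : ((↑(∑ p ∈ Finset.HasAntidiagonal.antidiagonal n,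
      PowerSeries.coeff (R := K) p.1 u * PowerSeries.coeff (R := K) p.2 v) : K) : C)
      = ∑ p ∈ Finset.HasAntidiagonal.antidiagonal n,
        ((PowerSeries.coeff (R := K) p.1 u : K) : C) * ((PowerSeries.coeff (R := K) p.2 v : K) : C) := by
    push_cast; rfl
  rw [hc]
  refine IsUltrametricDist.norm_sum_le_of_forall_le_of_nonneg (mul_nonneg h1 h2) (fun p _ => ?_)
  rw [norm_mul]
  exact mul_le_mul (hu p.1) (hv p.2) (norm_nonneg _) h1

include hK in
lemma weierstrass {f : PowerSeries K} {m : ℕ} (hm : 0 < m)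
    (hlow : ∀ i < m, ‖((PowerSeries.coeff (R := K) i f : K) : C)‖ < 1)
    (hu : ‖((PowerSeries.coeff (R := K) m f : K) : C)‖ = 1) :
    ∃ (Q : PowerSeries K) (b : ℕ → K), (∀ i < m, ‖((b i : K) : C)‖ < 1) ∧
      Q * f = PowerSeries.X ^ m
        + ∑ i ∈ Finset.range m, PowerSeries.C (R := K) (b i) * PowerSeries.X ^ i := by
  classical
  set a : ℕ → K := fun i => PowerSeries.coeff (R := K) i f with ha
  -- `a m` is a unit
  have ham : (a m : C) ≠ 0 := by
    intro h0
    rw [ha] at h0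
    simp only at h0
    rw [h0] at hu
    simp at hu
  have hamu : IsUnit (a m) := by
    refine IsUnit.of_mul_eq_one (a := a m) ⟨(a m : C)⁻¹, (hK _).2 ?_⟩ (Subtype.ext ?_)
    · rw [norm_inv, hu]; norm_num
    · push_cast
      exact mul_inv_cancel₀ ham
  -- the invertible high part
  set fhi : PowerSeries K := PowerSeries.mk fun j => a (m + j) with hfhi
  have hfhiu : IsUnit fhi := by
    rw [PowerSeries.isUnit_iff_constantCoeff]
    simpa [hfhi, PowerSeries.constantCoeff_mk] using hamu
  obtain ⟨U, hU⟩ := hfhiu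
  set g : PowerSeries K := (↑U⁻¹ : PowerSeries K) with hgdef
  have hgf : fhi * g = 1 := by rw [← hU, hgdef]; exact_mod_cast U.mul_inv
  -- ρ
  have hne : (Finset.range m).Nonempty := ⟨0, Finset.mem_range.2 hm⟩
  set ρ : ℝ := (Finset.range m).sup' hne (fun i => ‖((a i : K) : C)‖) with hρ
  have hρlt : ρ < 1 := (Finset.sup'_lt_iff hne).2 fun i hi => hlow i (Finset.mem_range.1 hi)
  have hρ0 : 0 ≤ ρ := le_trans (norm_nonneg ((a 0 : K) : C))
    (Finset.le_sup' (fun i => ‖((a i : K) : C)‖) (Finset.mem_range.2 hm))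
  have hρi : ∀ i < m, ‖((a i : K) : C)‖ ≤ ρ := fun i hi =>
    Finset.le_sup' (fun i => ‖((a i : K) : C)‖) (Finset.mem_range.2 hi)
  -- the low part
  set flo : PowerSeries K := PowerSeries.mk (fun j => if j < m then a j else 0) with hflo
  have hflob : ∀ n, ‖((PowerSeries.coeff (R := K) n flo : K) : C)‖ ≤ ρ := by
    intro n
    rw [hflo]
    simp only [PowerSeries.coeff_mk]
    split
    · exact hρi n (by assumption)
    · simpa using hρ0
  have hsplit : f = flo + PowerSeries.X ^ m * fhi := by
    ext n
    rw [map_add, coeff_X_pow_mul_cases]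
    by_cases h : n < m
    · rw [if_neg (by omega), hflo]
      simp [h, ha]
    · rw [if_pos (by omega), hflo, hfhi]
      simp only [PowerSeries.coeff_mk, if_neg h, zero_add]
      have e : m + (n - m) = n := by omega
      rw [e]
  -- the contraction iteration
  set T : PowerSeries K → PowerSeries K := fun q => g * (1 - shiftm m (q * flo)) with hT
  set qq : ℕ → PowerSeries K := fun k => T^[k] 0 with hqq
  have hTdiff : ∀ x y, T x - T y = g * shiftm m ((y - x) * flo) := by
    intro x y
    rw [hT]
    simp only
    have h1 : shiftm m ((y - x) * flo) = shiftm m (y * flo) - shiftm m (x * flo) := by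
      rw [sub_mul, shiftm_sub]
    rw [h1]
    ring
  have hgb : ∀ n, ‖((PowerSeries.coeff (R := K) n g : K) : C)‖ ≤ 1 := fun n => normK hK _
  have hd : ∀ k n, ‖((PowerSeries.coeff (R := K) n (qq (k+1) - qq k) : K) : C)‖ ≤ ρ ^ k := by
    intro k
    induction k with
    | zero =>
      intro n
      have h1 : qq 1 - qq 0 = g := by
        rw [hqq]
        simp only [Function.iterate_one, Function.iterate_zero, id_eq, sub_zero, hT, zero_mul,
          shiftm_zero, sub_zero, mul_one]
      rw [h1, pow_zero]
      exact hgb n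
    | succ k ih =>
      intro n
      have h1 : qq (k+2) - qq (k+1) = g * shiftm m ((qq k - qq (k+1)) * flo) := by
        have e1 : qq (k+2) = T (qq (k+1)) := by rw [hqq]; exact Function.iterate_succ_apply' T (k+1) 0
        have e2 : qq (k+1) = T (qq k) := by rw [hqq]; exact Function.iterate_succ_apply' T k 0
        rw [e1, e2]
        exact hTdiff _ _
      rw [h1]
      have hw : ∀ n', ‖((PowerSeries.coeff (R := K) n' (shiftm m ((qq k - qq (k+1)) * flo)) : K) : C)‖
          ≤ ρ ^ k * ρ := by
        intro n'
        rw [coeff_shiftm]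
        refine coeff_mul_bound (pow_nonneg hρ0 k) hρ0 (fun n'' => ?_) hflob (m + n')
        have : ((PowerSeries.coeff (R := K) n'' (qq k - qq (k+1)) : K) : C)
            = -(((PowerSeries.coeff (R := K) n'' (qq (k+1) - qq k) : K) : C)) := by
          rw [map_sub, map_sub]; push_cast; ring
        rw [this, norm_neg]
        exact ih n''
      have := coeff_mul_bound (zero_le_one) (mul_nonneg (pow_nonneg hρ0 k) hρ0) hgb hw n
      calc ‖((PowerSeries.coeff (R := K) n (g * shiftm m ((qq k - qq (k+1)) * flo)) : K) : C)‖
          ≤ 1 * (ρ ^ k * ρ) := this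
        _ = ρ ^ (k + 1) := by rw [one_mul, pow_succ]
  -- Cauchy sequences of coefficients
  have hcauchy : ∀ n, CauchySeq (fun k => ((PowerSeries.coeff (R := K) n (qq k) : K) : C)) := by
    intro n
    refine cauchySeq_of_le_geometric ρ 1 hρlt (fun k => ?_)
    rw [dist_eq_norm, one_mul]
    have : ((PowerSeries.coeff (R := K) n (qq k) : K) : C) - ((PowerSeries.coeff (R := K) n (qq (k+1)) : K) : C)
        = -(((PowerSeries.coeff (R := K) n (qq (k+1) - qq k) : K) : C)) := by
      rw [map_sub]; push_cast; ring
    rw [this, norm_neg]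
    exact hd k n
  have hlim : ∀ n, ∃ L : C, Filter.Tendsto (fun k => ((PowerSeries.coeff (R := K) n (qq k) : K) : C))
      Filter.atTop (nhds L) := fun n => cauchySeq_tendsto_of_complete (hcauchy n)
  choose L hL using hlim
  have hLle : ∀ n, ‖L n‖ ≤ 1 := fun n =>
    le_of_tendsto (hL n).norm (Filter.Eventually.of_forall fun k => normK hK _)
  set Qlim : PowerSeries K := PowerSeries.mk (fun n => (⟨L n, (hK _).2 (hLle n)⟩ : K)) with hQlim
  have hcoeffQ : ∀ u, ((PowerSeries.coeff (R := K) u Qlim : K) : C) = L u := by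
    intro u; rw [hQlim]; simp
  -- passage to the limit in T
  have key : ∀ n, Filter.Tendsto (fun k => ((PowerSeries.coeff (R := K) n (T (qq k)) : K) : C))
      Filter.atTop (nhds ((PowerSeries.coeff (R := K) n (T Qlim) : K) : C)) := by
    intro n
    have e1 : ∀ x : PowerSeries K, ((PowerSeries.coeff (R := K) n (T x) : K) : C)
        = ((PowerSeries.coeff (R := K) n g : K) : C)
          - ∑ p ∈ Finset.HasAntidiagonal.antidiagonal n, ((PowerSeries.coeff (R := K) p.1 g : K) : C) *
              ∑ q ∈ Finset.HasAntidiagonal.antidiagonal (m + p.2),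
                ((PowerSeries.coeff (R := K) q.1 x : K) : C) * ((PowerSeries.coeff (R := K) q.2 flo : K) : C) := by
      intro x
      have h2 : T x = g - g * shiftm m (x * flo) := by rw [hT]; ring
      rw [h2, map_sub]
      push_cast
      congr 1
      rw [PowerSeries.coeff_mul]
      push_cast
      refine Finset.sum_congr rfl (fun p _ => ?_)
      rw [coeff_shiftm, PowerSeries.coeff_mul]
      push_cast
      rfl
    simp only [e1]
    refine Filter.Tendsto.const_sub _ (tendsto_finset_sum _ (fun p _ => ?_))
    refine Filter.Tendsto.const_mul _ (tendsto_finset_sum _ (fun q _ => ?_))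
    rw [hcoeffQ]
    exact (hL q.1).mul_const _
  have hfix : Qlim = T Qlim := by
    ext n
    show ((PowerSeries.coeff (R := K) n Qlim : K) : C) = ((PowerSeries.coeff (R := K) n (T Qlim) : K) : C)
    rw [hcoeffQ]
    have h1 : Filter.Tendsto (fun k => ((PowerSeries.coeff (R := K) n (qq (k+1)) : K) : C))
        Filter.atTop (nhds (L n)) := by
      have := (hL n).comp (Filter.tendsto_add_atTop_nat 1)
      exact this
    have h2 : (fun k => ((PowerSeries.coeff (R := K) n (qq (k+1)) : K) : C))
        = fun k => ((PowerSeries.coeff (R := K) n (T (qq k)) : K) : C) := by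
      funext k
      congr 1
      rw [hqq]
      simp only
      rw [Function.iterate_succ_apply']
    rw [h2] at h1
    exact tendsto_nhds_unique h1 (key n)
  -- conclude
  have hfhiQ : fhi * Qlim = 1 - shiftm m (Qlim * flo) := by
    conv_lhs => rw [hfix]
    rw [hT]
    simp only
    rw [← mul_assoc, hgf, one_mul]
  have hhigh : ∀ j, PowerSeries.coeff (R := K) (m + j) (Qlim * f)
      = if j = 0 then 1 else 0 := by
    intro j
    have h1 : Qlim * f = Qlim * flo + PowerSeries.X ^ m * (fhi * Qlim) := by
      conv_lhs => rw [hsplit]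
      ring
    rw [h1, map_add, add_comm m j, PowerSeries.coeff_X_pow_mul, hfhiQ, map_sub, coeff_shiftm,
      add_comm j m]
    rw [PowerSeries.coeff_one]
    ring
  have hlowP : ∀ j, j < m → ‖((PowerSeries.coeff (R := K) j (Qlim * f) : K) : C)‖ ≤ ρ := by
    intro j hj
    rw [PowerSeries.coeff_mul]
    have hc : ((↑(∑ p ∈ Finset.HasAntidiagonal.antidiagonal j,
        PowerSeries.coeff (R := K) p.1 Qlim * PowerSeries.coeff (R := K) p.2 f) : K) : C)
        = ∑ p ∈ Finset.HasAntidiagonal.antidiagonal j,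
          ((PowerSeries.coeff (R := K) p.1 Qlim : K) : C) * ((PowerSeries.coeff (R := K) p.2 f : K) : C) := by
      push_cast; rfl
    rw [hc]
    refine IsUltrametricDist.norm_sum_le_of_forall_le_of_nonneg hρ0 (fun p hp => ?_)
    rw [Finset.HasAntidiagonal.mem_antidiagonal] at hp
    rw [norm_mul]
    have h2 : ‖((PowerSeries.coeff (R := K) p.2 f : K) : C)‖ ≤ ρ := hρi p.2 (by omega)
    have h1 : ‖((PowerSeries.coeff (R := K) p.1 Qlim : K) : C)‖ ≤ 1 := normK hK _
    nlinarith [norm_nonneg ((PowerSeries.coeff (R := K) p.2 f : K) : C)]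
  refine ⟨Qlim, fun i => PowerSeries.coeff (R := K) i (Qlim * f),
    fun i hi => lt_of_le_of_lt (hlowP i hi) hρlt, ?_⟩
  ext n
  rw [map_add]
  rw [PowerSeries.coeff_X_pow]
  have hsum : PowerSeries.coeff (R := K) n (∑ i ∈ Finset.range m,
      PowerSeries.C (R := K) (PowerSeries.coeff (R := K) i (Qlim * f)) * PowerSeries.X ^ i)
      = if n < m then PowerSeries.coeff (R := K) n (Qlim * f) else 0 := by
    rw [map_sum]
    have : ∀ i ∈ Finset.range m, PowerSeries.coeff (R := K) n (PowerSeries.C (R := K)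
        (PowerSeries.coeff (R := K) i (Qlim * f)) * PowerSeries.X ^ i)
        = if i = n then (if n < m then PowerSeries.coeff (R := K) n (Qlim * f) else 0) else 0 := by
      intro i hi
      rw [PowerSeries.coeff_C_mul, PowerSeries.coeff_X_pow]
      by_cases h : i = n
      · subst h
        simp [Finset.mem_range.1 hi]
      · simp [h, Ne.symm h]
    rw [Finset.sum_congr rfl this, Finset.sum_ite_eq' (Finset.range m) n]
    by_cases h : n < m
    · simp [h]
    · simp [h]
  rw [hsum]
  by_cases h : n < m
  · rw [if_neg (by omega), if_pos h, zero_add]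
  · rw [if_neg h]
    have : n = m + (n - m) := by omega
    rw [this, hhigh (n - m)]
    by_cases h2 : n - m = 0
    · rw [if_pos h2, if_pos (by omega), add_zero]
    · rw [if_neg h2, if_neg (by omega), add_zero]

end Stage2

section Stage3

variable {C : Type} [NontriviallyNormedField C] [CompleteSpace C] [IsUltrametricDist C]
  {K : Subring C} (hK : ∀ x : C, x ∈ K ↔ ‖x‖ ≤ 1)

include hK in
lemma isUnitK {x : K} (hx : ‖(x : C)‖ = 1) : IsUnit x := by
  have hx0 : (x : C) ≠ 0 := by
    intro h0; rw [h0] at hx; simp at hx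
  refine IsUnit.of_mul_eq_one (a := x) ⟨(x : C)⁻¹, (hK _).2 ?_⟩ (Subtype.ext ?_)
  · rw [norm_inv, hx]; norm_num
  · push_cast
    exact mul_inv_cancel₀ hx0

lemma prime_multiset_prod {R : Type*} [CommRing R] {I : Ideal R} (hI : I.IsPrime)
    (t : Multiset R) (h : t.prod ∈ I) : ∃ z ∈ t, z ∈ I := by
  induction t using Multiset.induction_on with
  | empty =>
    exfalso
    rw [Multiset.prod_zero] at h
    exact hI.ne_top (Ideal.eq_top_of_isUnit_mem _ h isUnit_one)
  | cons a s ih =>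
    rw [Multiset.prod_cons] at h
    rcases hI.mem_or_mem h with h1 | h2
    · exact ⟨a, Multiset.mem_cons_self a s, h1⟩
    · obtain ⟨z, hz, hz2⟩ := ih h2
      exact ⟨z, Multiset.mem_cons_of_mem hz, hz2⟩

include hK in
lemma exists_linear_factor [IsAlgClosed C] {m : ℕ} (hm : 0 < m) (b : ℕ → K)
    (hb : ∀ i < m, ‖((b i : K) : C)‖ < 1)
    {𝔭 : Ideal (PowerSeries K)} (hp : 𝔭.IsPrime)
    (hmem : (PowerSeries.X ^ m
        + ∑ i ∈ Finset.range m, PowerSeries.C (R := K) (b i) * PowerSeries.X ^ i) ∈ 𝔭) :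
    ∃ c : K, ‖(c : C)‖ < 1 ∧ PowerSeries.X - PowerSeries.C (R := K) c ∈ 𝔭 := by
  classical
  set Pp : Polynomial K := Polynomial.X ^ m
      + ∑ i ∈ Finset.range m, Polynomial.C (b i) * Polynomial.X ^ i with hPp
  have hPcoeff : ∀ n, Pp.coeff n = (if n = m then 1 else 0) + (if n < m then b n else 0) := by
    intro n
    rw [hPp, Polynomial.coeff_add, Polynomial.coeff_X_pow, Polynomial.finset_sum_coeff]
    congr 1
    have h1 : ∀ i ∈ Finset.range m, (Polynomial.C (b i) * Polynomial.X ^ i).coeff n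
        = if i = n then (if n < m then b n else 0) else 0 := by
      intro i hi
      rw [Polynomial.coeff_C_mul, Polynomial.coeff_X_pow]
      by_cases h : i = n
      · subst h; simp [Finset.mem_range.1 hi]
      · simp [h, Ne.symm h]
    rw [Finset.sum_congr rfl h1, Finset.sum_ite_eq' (Finset.range m) n]
    by_cases h : n < m
    · simp [h]
    · simp [h]
  have hmonic : Pp.Monic := by
    rw [hPp]
    apply Polynomial.monic_X_pow_add
    refine lt_of_le_of_lt (Polynomial.degree_sum_le _ _) ?_
    refine (Finset.sup_lt_iff (by exact_mod_cast WithBot.bot_lt_coe m)).mpr (fun i hi => ?_)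
    refine lt_of_le_of_lt (Polynomial.degree_C_mul_X_pow_le _ _) ?_
    exact_mod_cast Finset.mem_range.1 hi
  set φ : K →+* C := K.subtype with hφ
  set Q' : Polynomial C := Pp.map φ with hQ'
  have hQmonic : Q'.Monic := hmonic.map φ
  have hQcoeff : ∀ n, Q'.coeff n = ((Pp.coeff n : K) : C) := fun n => Polynomial.coeff_map φ n
  have hQdeg : Q'.natDegree ≤ m := by
    rw [Polynomial.natDegree_le_iff_coeff_eq_zero]
    intro N hN
    rw [hQcoeff, hPcoeff, if_neg (by omega), if_neg (by omega)]
    simp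
  have hne : (Finset.range m).Nonempty := ⟨0, Finset.mem_range.2 hm⟩
  have hroots : ∀ z ∈ Q'.roots, ‖z‖ < 1 := by
    intro z hz
    have hzr : Polynomial.eval z Q' = 0 := Polynomial.isRoot_of_mem_roots hz
    by_contra hc1
    push_neg at hc1
    have hz0 : (0:ℝ) < ‖z‖ := lt_of_lt_of_le one_pos hc1
    have heval := Polynomial.eval_eq_sum_range' (lt_of_le_of_lt hQdeg (Nat.lt_succ_self m)) z
    rw [hzr] at heval
    rw [Finset.sum_range_succ] at heval
    have hQm : Q'.coeff m = 1 := by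
      rw [hQcoeff, hPcoeff, if_pos rfl, if_neg (by omega)]
      push_cast
      simp
    rw [hQm, one_mul] at heval
    have hzm : z ^ m = -∑ i ∈ Finset.range m, Q'.coeff i * z ^ i := by
      linear_combination -heval
    set ρ' : ℝ := (Finset.range m).sup' hne (fun i => ‖((b i : K) : C)‖) with hρ'
    have hρ'lt : ρ' < 1 := (Finset.sup'_lt_iff hne).2 fun i hi => hb i (Finset.mem_range.1 hi)
    have hρ'0 : 0 ≤ ρ' := le_trans (norm_nonneg _)
      (Finset.le_sup' (fun i => ‖((b i : K) : C)‖) (Finset.mem_range.2 hm))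
    have hbound : ‖∑ i ∈ Finset.range m, Q'.coeff i * z ^ i‖ ≤ ρ' * ‖z‖ ^ (m-1) := by
      refine IsUltrametricDist.norm_sum_le_of_forall_le_of_nonneg
        (mul_nonneg hρ'0 (pow_nonneg (norm_nonneg z) _)) (fun i hi => ?_)
      rw [norm_mul, norm_pow]
      have him : i < m := Finset.mem_range.1 hi
      have h1 : Q'.coeff i = ((b i : K) : C) := by
        rw [hQcoeff, hPcoeff, if_neg (by omega), if_pos him]
        push_cast
        simp
      rw [h1]
      have h2 : ‖z‖ ^ i ≤ ‖z‖ ^ (m-1) :=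
        pow_le_pow_right₀ hc1 (by omega)
      have h3 : ‖((b i : K) : C)‖ ≤ ρ' := Finset.le_sup' (fun i => ‖((b i : K) : C)‖) hi
      nlinarith [norm_nonneg ((b i : K) : C), pow_nonneg (norm_nonneg z) i]
    have hzpow : ‖z‖ ^ m ≤ ρ' * ‖z‖ ^ (m-1) := by
      rw [← norm_pow, hzm, norm_neg]
      exact hbound
    have hfin : ‖z‖ ^ m = ‖z‖ ^ (m-1) * ‖z‖ := by
      rw [← pow_succ]
      congr 1
      omega
    have hp1 : (0:ℝ) < ‖z‖ ^ (m-1) := pow_pos hz0 _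
    nlinarith [hzpow, hρ'lt, hp1, hfin, hc1]
  have hsplits : Q' = (Q'.roots.map fun z => Polynomial.X - Polynomial.C z).prod :=
    (IsAlgClosed.splits Q').eq_prod_roots_of_monic hQmonic
  set t : Multiset K := Q'.roots.pmap (fun z hz => (⟨z, (hK z).2 hz⟩ : K))
      (fun z hz => (hroots z hz).le) with htdef
  have hinj : Function.Injective (PowerSeries.map φ : PowerSeries K → PowerSeries C) := by
    intro x y hxy
    ext n
    have h := congrArg (PowerSeries.coeff (R := C) n) hxy
    rw [PowerSeries.coeff_map, PowerSeries.coeff_map] at h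
    exact h
  have hfact : (PowerSeries.X ^ m
      + ∑ i ∈ Finset.range m, PowerSeries.C (R := K) (b i) * PowerSeries.X ^ i)
      = (t.map fun z => PowerSeries.X - PowerSeries.C (R := K) z).prod := by
    apply hinj
    have hL : PowerSeries.map φ (PowerSeries.X ^ m
        + ∑ i ∈ Finset.range m, PowerSeries.C (R := K) (b i) * PowerSeries.X ^ i)
        = PowerSeries.X ^ m
          + ∑ i ∈ Finset.range m, PowerSeries.C (R := C) ((b i : K) : C) * PowerSeries.X ^ i := by
      rw [map_add, map_pow, PowerSeries.map_X, map_sum]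
      congr 1
      refine Finset.sum_congr rfl fun i _ => ?_
      rw [map_mul, map_pow, PowerSeries.map_X, PowerSeries.map_C]
      rfl
    have hR : PowerSeries.map φ ((t.map fun z => PowerSeries.X - PowerSeries.C (R := K) z).prod)
        = ((Q'.roots).map fun z => PowerSeries.X - PowerSeries.C (R := C) z).prod := by
      rw [map_multiset_prod, Multiset.map_map, htdef, Multiset.map_pmap]
      congr 1
      refine Eq.trans (Multiset.pmap_congr Q'.roots
        (H₂ := fun z hz => (hroots z hz).le)
        (g := fun z (_ : ‖z‖ ≤ 1) => PowerSeries.X - PowerSeries.C (R := C) z)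
        (fun z hz h1 h2 => ?_))
        (Multiset.pmap_eq_map _ _ _ _)
      simp only [Function.comp_apply]
      rw [map_sub, PowerSeries.map_X, PowerSeries.map_C]
      rfl
    rw [hL, hR]
    -- now a statement about polynomials coerced to power series
    have hQpoly : Q' = Polynomial.X ^ m
        + ∑ i ∈ Finset.range m, Polynomial.C ((b i : K) : C) * Polynomial.X ^ i := by
      rw [hQ', hPp, Polynomial.map_add, Polynomial.map_pow, Polynomial.map_X,
        Polynomial.map_sum]
      congr 1
      refine Finset.sum_congr rfl fun i _ => ?_
      rw [Polynomial.map_mul, Polynomial.map_pow, Polynomial.map_X, Polynomial.map_C]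
      rfl
    have hcoe1 : ((Q' : Polynomial C) : PowerSeries C) = PowerSeries.X ^ m
        + ∑ i ∈ Finset.range m, PowerSeries.C (R := C) ((b i : K) : C) * PowerSeries.X ^ i := by
      rw [hQpoly]
      rw [← Polynomial.coeToPowerSeries.ringHom_apply, map_add, map_pow, map_sum]
      rw [Polynomial.coeToPowerSeries.ringHom_apply, Polynomial.coe_X]
      congr 1
      refine Finset.sum_congr rfl fun i _ => ?_
      rw [map_mul, map_pow, Polynomial.coeToPowerSeries.ringHom_apply,
        Polynomial.coeToPowerSeries.ringHom_apply, Polynomial.coe_X, Polynomial.coe_C]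
    have hcoe2 : ((Q' : Polynomial C) : PowerSeries C)
        = ((Q'.roots).map fun z => PowerSeries.X - PowerSeries.C (R := C) z).prod := by
      conv_lhs => rw [hsplits]
      rw [← Polynomial.coeToPowerSeries.ringHom_apply, map_multiset_prod, Multiset.map_map]
      congr 1
      refine Multiset.map_congr rfl fun z hz => ?_
      simp only [Function.comp_apply]
      rw [Polynomial.coeToPowerSeries.ringHom_apply, Polynomial.coe_sub, Polynomial.coe_X,
        Polynomial.coe_C]
    rw [← hcoe1, hcoe2]
  rw [hfact] at hmem
  obtain ⟨w, hw, hwmem⟩ := prime_multiset_prod hp _ hmem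
  rw [Multiset.mem_map] at hw
  obtain ⟨c, hct, hcw⟩ := hw
  refine ⟨c, ?_, by rw [hcw]; exact hwmem⟩
  rw [htdef] at hct
  rw [Multiset.mem_pmap] at hct
  obtain ⟨z, hzs, hzc⟩ := hct
  have : (c : C) = z := by rw [← hzc]
  rw [this]
  exact hroots z hzs

end Stage3


/-- The valuation ring `O_C = {x : C | ‖x‖ ≤ 1}` of a nonarchimedean normed field. -/
def OC (C : Type) [NormedField C] (hna : IsNonarchimedean (norm : C → ℝ)) : Subring C where
  carrier := {x : C | ‖x‖ ≤ 1}
  mul_mem' := fun {a b} (ha : ‖a‖ ≤ 1) (hb : ‖b‖ ≤ 1) => by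
    have : ‖a * b‖ = ‖a‖ * ‖b‖ := norm_mul a b
    simp only [Set.mem_setOf_eq, this]
    nlinarith [norm_nonneg a, norm_nonneg b]
  one_mem' := by simp
  add_mem' := fun {a b} (ha : ‖a‖ ≤ 1) (hb : ‖b‖ ≤ 1) =>
    le_trans (hna a b) (max_le ha hb)
  zero_mem' := by simp
  neg_mem' := fun {a} (ha : ‖a‖ ≤ 1) => by simpa using ha

theorem statement0 (p : ℕ) [Fact p.Prime] (C : Type) [NontriviallyNormedField C]
    [IsAlgClosed C] [CharP C p] [CompleteSpace C]
    (hna : IsNonarchimedean (norm : C → ℝ))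
    (𝔭 : Ideal (PowerSeries (OC C hna))) (h𝔭 : 𝔭.IsPrime) :
    -- (i) 𝔭 is contained in 𝔭_crys
    (∀ f ∈ 𝔭, ∀ n : ℕ, ‖(PowerSeries.coeff (R := (OC C hna)) n f : C)‖ < 1) ∨
    -- (ii) 𝔭 equals the maximal ideal 𝔪
    (∀ f : PowerSeries (OC C hna), f ∈ 𝔭 ↔ ‖(PowerSeries.coeff (R := (OC C hna)) 0 f : C)‖ < 1) ∨
    -- (iii) 𝔭 is generated by X - c for some c ∈ m_C
    (∃ c : OC C hna, ‖(c : C)‖ < 1 ∧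
      𝔭 = Ideal.span {PowerSeries.X - PowerSeries.C (R := (OC C hna)) c}) := by
  classical
  classical
  haveI : IsUltrametricDist C := IsUltrametricDist.isUltrametricDist_of_isNonarchimedean_norm hna
  have hK : ∀ x : C, x ∈ OC C hna ↔ ‖x‖ ≤ 1 := fun x => Iff.rfl
  have hmax : ∀ x y : C, ‖x - y‖ ≤ max ‖x‖ ‖y‖ := fun x y => by
    rw [sub_eq_add_neg]
    refine le_trans (hna x (-y)) ?_
    rw [norm_neg]
  by_cases hcase : ∀ f ∈ 𝔭, ∀ n : ℕ, ‖((PowerSeries.coeff (R := (OC C hna)) n f : (OC C hna)) : C)‖ < 1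
  · exact Or.inl hcase
  push_neg at hcase
  obtain ⟨f₀, hf₀, n₀, hn₀⟩ := hcase
  have hex : ∃ k, ‖((PowerSeries.coeff (R := (OC C hna)) k f₀ : (OC C hna)) : C)‖ = 1 :=
    ⟨n₀, le_antisymm (normK hK _) hn₀⟩
  have hm1 : ‖((PowerSeries.coeff (R := (OC C hna)) (Nat.find hex) f₀ : (OC C hna)) : C)‖ = 1 := Nat.find_spec hex
  have hmlow : ∀ i < Nat.find hex, ‖((PowerSeries.coeff (R := (OC C hna)) i f₀ : (OC C hna)) : C)‖ < 1 := fun i hi =>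
    lt_of_le_of_ne (normK hK _) (Nat.find_min hex hi)
  have hm0 : 0 < Nat.find hex := by
    rcases Nat.eq_zero_or_pos (Nat.find hex) with h0 | h
    · exfalso
      rw [h0] at hm1
      have hunit : IsUnit f₀ := by
        rw [PowerSeries.isUnit_iff_constantCoeff]
        exact PowerSeries.coeff_zero_eq_constantCoeff_apply f₀ ▸ isUnitK hK hm1
      exact h𝔭.ne_top (Ideal.eq_top_of_isUnit_mem _ hf₀ hunit)
    · exact h
  obtain ⟨Q, b, hb, hQf⟩ := weierstrass hK hm0 hmlow hm1
  have hmem : (PowerSeries.X ^ (Nat.find hex) + ∑ i ∈ Finset.range (Nat.find hex),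
      PowerSeries.C (R := (OC C hna)) (b i) * PowerSeries.X ^ i) ∈ 𝔭 := by
    rw [← hQf]
    exact Ideal.mul_mem_left 𝔭 Q hf₀
  obtain ⟨c, hc, hXc⟩ := exists_linear_factor hK hm0 b hb h𝔭 hmem
  have hspan : Ideal.span {PowerSeries.X - PowerSeries.C (R := (OC C hna)) c} ≤ 𝔭 :=
    Ideal.span_le.2 (Set.singleton_subset_iff.2 hXc)
  rcases Classical.em (𝔭 ≤ Ideal.span {PowerSeries.X - PowerSeries.C (R := (OC C hna)) c}) with
    hsub | hsub
  · exact Or.inr (Or.inr ⟨c, hc, le_antisymm hsub hspan⟩)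
  -- case (ii)
  have hevmem : ∀ g ∈ 𝔭, ‖evalK (c : C) g‖ < 1 := by
    intro g hg
    have hle : ‖evalK (c : C) g‖ ≤ 1 := evalK_norm_le hK hc g
    rcases lt_or_eq_of_le hle with h | h
    · exact h
    · exfalso
      set e : (OC C hna) := ⟨evalK (c : C) g, (hK _).2 hle⟩ with hedef
      have hker : g - PowerSeries.C (R := (OC C hna)) e ∈ 𝔭 := by
        refine hspan (mem_span_of_evalK_eq_zero hK hc ?_)
        rw [evalK_sub hK hc, evalK_C]
        exact sub_self _
      have hCmem : PowerSeries.C (R := (OC C hna)) e ∈ 𝔭 := by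
        have h2 := Ideal.sub_mem 𝔭 hg hker
        simpa using h2
      have hCu : IsUnit (PowerSeries.C (R := (OC C hna)) e) := (isUnitK hK h).map (PowerSeries.C (R := (OC C hna)))
      exact h𝔭.ne_top (Ideal.eq_top_of_isUnit_mem _ hCmem hCu)
  obtain ⟨h1, hh1mem, hh1span⟩ := SetLike.not_le_iff_exists.1 hsub
  have hq0ne : evalK (c : C) h1 ≠ 0 := fun h0 => hh1span (mem_span_of_evalK_eq_zero hK hc h0)
  have hq0lt : ‖evalK (c : C) h1‖ < 1 := hevmem h1 hh1mem
  set q0 : (OC C hna) := ⟨evalK (c : C) h1, (hK _).2 hq0lt.le⟩ with hq0def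
  have hCq0 : PowerSeries.C (R := (OC C hna)) q0 ∈ 𝔭 := by
    have hker : h1 - PowerSeries.C (R := (OC C hna)) q0 ∈ 𝔭 := by
      refine hspan (mem_span_of_evalK_eq_zero hK hc ?_)
      rw [evalK_sub hK hc, evalK_C]
      exact sub_self _
    simpa using Ideal.sub_mem 𝔭 hh1mem hker
  refine Or.inr (Or.inl (fun g => ⟨?_, ?_⟩))
  · intro hg
    have h1' := hevmem g hg
    have h2 := evalK_sub_head hK hc g
    have h3 : ((PowerSeries.coeff (R := (OC C hna)) 0 g : (OC C hna)) : C)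
        = evalK (c : C) g - (evalK (c : C) g - ((PowerSeries.coeff (R := (OC C hna)) 0 g : (OC C hna)) : C)) := by ring
    calc ‖((PowerSeries.coeff (R := (OC C hna)) 0 g : (OC C hna)) : C)‖
        = ‖evalK (c : C) g - (evalK (c : C) g - ((PowerSeries.coeff (R := (OC C hna)) 0 g : (OC C hna)) : C))‖ := by
          rw [← h3]
      _ ≤ max ‖evalK (c : C) g‖ ‖evalK (c : C) g - ((PowerSeries.coeff (R := (OC C hna)) 0 g : (OC C hna)) : C)‖ :=
          hmax _ _
      _ < 1 := max_lt h1' (lt_of_le_of_lt h2 hc)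
  · intro hg0
    have h2 := evalK_sub_head hK hc g
    have hvlt : ‖evalK (c : C) g‖ < 1 := by
      have h3 : evalK (c : C) g = ((PowerSeries.coeff (R := (OC C hna)) 0 g : (OC C hna)) : C)
          - (((PowerSeries.coeff (R := (OC C hna)) 0 g : (OC C hna)) : C) - evalK (c : C) g) := by ring
      calc ‖evalK (c : C) g‖
          = ‖((PowerSeries.coeff (R := (OC C hna)) 0 g : (OC C hna)) : C)
              - (((PowerSeries.coeff (R := (OC C hna)) 0 g : (OC C hna)) : C) - evalK (c : C) g)‖ := by rw [← h3]
        _ ≤ max ‖((PowerSeries.coeff (R := (OC C hna)) 0 g : (OC C hna)) : C)‖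
              ‖((PowerSeries.coeff (R := (OC C hna)) 0 g : (OC C hna)) : C) - evalK (c : C) g‖ := hmax _ _
        _ < 1 := by
            refine max_lt hg0 ?_
            rw [norm_sub_rev]
            exact lt_of_le_of_lt h2 hc
    set v : (OC C hna) := ⟨evalK (c : C) g, (hK _).2 hvlt.le⟩ with hvdef
    have hCv : PowerSeries.C (R := (OC C hna)) v ∈ 𝔭 := by
      by_cases hv0 : (v : C) = 0
      · have : v = 0 := Subtype.ext hv0
        rw [this, map_zero]
        exact 𝔭.zero_mem
      · have hq0pos : 0 < ‖(q0 : C)‖ := norm_pos_iff.2 hq0ne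
        obtain ⟨N, hN⟩ : ∃ N, ‖(v : C)‖ ^ N < ‖(q0 : C)‖ := by
          have ht := tendsto_pow_atTop_nhds_zero_of_lt_one (norm_nonneg (v : C)) hvlt
          exact (ht.eventually (gt_mem_nhds hq0pos)).exists
        have hwle : ‖(v : C) ^ N * (q0 : C)⁻¹‖ ≤ 1 := by
          rw [← div_eq_mul_inv, norm_div, norm_pow, div_le_one hq0pos]
          exact hN.le
        have hvN : v ^ N = q0 * ⟨(v : C) ^ N * (q0 : C)⁻¹, (hK _).2 hwle⟩ := by
          apply Subtype.ext
          push_cast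
          field_simp [show (q0 : C) ≠ 0 from hq0ne]
        have hpow : PowerSeries.C (R := (OC C hna)) v ^ N ∈ 𝔭 := by
          rw [← map_pow, hvN, map_mul]
          exact Ideal.mul_mem_right _ _ hCq0
        exact h𝔭.mem_of_pow_mem N hpow
    have hker : g - PowerSeries.C (R := (OC C hna)) v ∈ 𝔭 := by
      refine hspan (mem_span_of_evalK_eq_zero hK hc ?_)
      rw [evalK_sub hK hc, evalK_C]
      exact sub_self _
    simpa using Ideal.add_mem 𝔭 hker hCv
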